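/- arXiv:1609.06153 — 3 statements merged into one kernel-verified Lean document; each statement's English description precedes it below -/
import Mathlib

section
/- Let Y, r be reals, 0 < b < 1, e > 0, f > 0, g > 0, and let δ_ang(T), δ_ang(G), δ_dae(T), δ_dae(G) be arbitrary reals. Consider the two-player game in which each player's action set is {T, G} and the utilities are: u_ang(T,T) = Y - (f/g)·b·(δ_ang(T)+δ_dae(T)), u_dae(T,T) = r - (e/g)·b·(δ_ang(T)+δ_dae(T)); u_ang(T,G) = Y + (f/g)·(δ_dae(G) - b·δ_ang(T)), u_dae(T,G) = r + (e/g)·(δ_dae(G) - b·δ_ang(T)); u_ang(G,T) = Y + (f/g)·(δ_ang(G) - b·δ_dae(T)), u_dae(G,T) = r + (e/g)·(δ_ang(G) - b·δ_dae(T)); u_ang(G,G) = Y + (f/g)·(δ_ang(G)+δ_dae(G)), u_dae(G,G) = r + (e/g)·(δ_ang(G)+δ_dae(G)). Then this game always has a dominant strategy equilibrium. -/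
/-- Actions in the fiscal-policy angel-daemon game: perturb taxes T or
government spending G. -/
inductive FiscalAct : Type
  | T : FiscalAct
  | G : FiscalAct

/-- Generic utility of the fiscal-policy angel-daemon game: `base` is the
unperturbed value (Y for the angel, r for the daemon) and `coef` the
multiplier (f/g for the angel, e/g for the daemon); the first action is the
angel's and the second the daemon's. -/
def fiscalU (base coef b δangT δangG δdaeT δdaeG : ℝ) :
    FiscalAct → FiscalAct → ℝ
  | FiscalAct.T, FiscalAct.T => base - coef * (b * (δangT + δdaeT))
  | FiscalAct.T, FiscalAct.G => base + coef * (δdaeG - b * δangT)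
  | FiscalAct.G, FiscalAct.T => base + coef * (δangG - b * δdaeT)
  | FiscalAct.G, FiscalAct.G => base + coef * (δangG + δdaeG)

/-- (a, d) is a dominant strategy equilibrium: each player's action is a best
response independently of the other player's action. -/
def IsDSE {α β : Type*} (uang udae : α → β → ℝ) (a : α) (d : β) : Prop :=
  ∀ (a' : α) (d' : β), uang a' d' ≤ uang a d' ∧ udae a' d' ≤ udae a' d

set_option maxHeartbeats 2000000 in
/-- The fiscal-policy angel-daemon game always has a dominant
strategy equilibrium. -/
theorem fiscal_game_has_DSE
    (Y r b e f g δangT δangG δdaeT δdaeG : ℝ)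
    (hb0 : 0 < b) (hb1 : b < 1) (he : 0 < e) (hf : 0 < f) (hg : 0 < g) :
    ∃ (a : FiscalAct) (d : FiscalAct),
      IsDSE (fiscalU Y (f / g) b δangT δangG δdaeT δdaeG)
            (fiscalU r (e / g) b δangT δangG δdaeT δdaeG) a d := by
  have hfg : 0 < f / g := div_pos hf hg
  have heg : 0 < e / g := div_pos he hg
  by_cases h1 : 0 ≤ δangG + b * δangT <;> by_cases h2 : 0 ≤ δdaeG + b * δdaeT
  · have k1 : 0 ≤ f / g * (δangG + b * δangT) := mul_nonneg hfg.le h1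
    have k2 : 0 ≤ e / g * (δdaeG + b * δdaeT) := mul_nonneg heg.le h2
    exact ⟨FiscalAct.G, FiscalAct.G, fun a' d' => by
      cases a' <;> cases d' <;> constructor <;>
        simp only [fiscalU] <;> nlinarith [k1, k2]⟩
  · have k1 : 0 ≤ f / g * (δangG + b * δangT) := mul_nonneg hfg.le h1
    have k2 : e / g * (δdaeG + b * δdaeT) ≤ 0 :=
      mul_nonpos_of_nonneg_of_nonpos heg.le (le_of_not_ge h2)
    exact ⟨FiscalAct.G, FiscalAct.T, fun a' d' => by
      cases a' <;> cases d' <;> constructor <;>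
        simp only [fiscalU] <;> nlinarith [k1, k2]⟩
  · have k1 : f / g * (δangG + b * δangT) ≤ 0 :=
      mul_nonpos_of_nonneg_of_nonpos hfg.le (le_of_not_ge h1)
    have k2 : 0 ≤ e / g * (δdaeG + b * δdaeT) := mul_nonneg heg.le h2
    exact ⟨FiscalAct.T, FiscalAct.G, fun a' d' => by
      cases a' <;> cases d' <;> constructor <;>
        simp only [fiscalU] <;> nlinarith [k1, k2]⟩
  · have k1 : f / g * (δangG + b * δangT) ≤ 0 :=
      mul_nonpos_of_nonneg_of_nonpos hfg.le (le_of_not_ge h1)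
    have k2 : e / g * (δdaeG + b * δdaeT) ≤ 0 :=
      mul_nonpos_of_nonneg_of_nonpos heg.le (le_of_not_ge h2)
    exact ⟨FiscalAct.T, FiscalAct.T, fun a' d' => by
      cases a' <;> cases d' <;> constructor <;>
        simp only [fiscalU] <;> nlinarith [k1, k2]⟩
end

section
/- In the fiscal-policy angel-daemon game (action sets {T, G} for each player, utilities u_ang, u_dae given by the bimatrix with u_ang(T,T) = Y - (f/g)b(δ_ang(T)+δ_dae(T)), u_ang(T,G) = Y + (f/g)(δ_dae(G) - bδ_ang(T)), u_ang(G,T) = Y + (f/g)(δ_ang(G) - bδ_dae(T)), u_ang(G,G) = Y + (f/g)(δ_ang(G)+δ_dae(G)), and u_dae the same expressions with f replaced by e and Y replaced by r), assume 0 < b < 1, e > 0, f > 0, g > 0, and define μ_ang = b·δ_ang(T) + δ_ang(G) and μ_dae = b·δ_dae(T) + δ_dae(G). Then for every daemon action d ∈ {T, G}, u_ang(G, d) - u_ang(T, d) = (f/g)·μ_ang, and for every angel action a ∈ {T, G}, u_dae(a, G) - u_dae(a, T) = (e/g)·μ_dae. In particular, for each daemon action d the angel's best-response set is {G} if μ_ang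 > 0, {T, G} if μ_ang = 0 and {T} if μ_ang < 0, and for each angel action a the daemon's best-response set is {G} if μ_dae > 0, {T, G} if μ_dae = 0 and {T} if μ_dae < 0. -/
lemma br_aux (u : FiscalAct → ℝ) (c μ : ℝ) (hc : 0 < c)
    (h : u FiscalAct.G - u FiscalAct.T = c * μ) :
    (0 < μ → {a : FiscalAct | ∀ a', u a' ≤ u a} = {FiscalAct.G}) ∧
    (μ = 0 → {a : FiscalAct | ∀ a', u a' ≤ u a} = {FiscalAct.T, FiscalAct.G}) ∧
    (μ < 0 → {a : FiscalAct | ∀ a', u a' ≤ u a} = {FiscalAct.T}) := by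
  refine ⟨fun hμ => ?_, fun hμ => ?_, fun hμ => ?_⟩
  · have hcm : 0 < c * μ := mul_pos hc hμ
    ext x
    cases x with
    | T =>
      simp only [Set.mem_setOf_eq, Set.mem_singleton_iff]
      constructor
      · intro hall; have := hall FiscalAct.G; linarith
      · intro hx; exact absurd hx (by simp)
    | G =>
      simp only [Set.mem_setOf_eq, Set.mem_singleton_iff]
      constructor
      · intro _; trivial
      · intro _ a'; cases a' <;> linarith
  · have hcm : c * μ = 0 := by rw [hμ]; ring
    ext x
    simp only [Set.mem_setOf_eq, Set.mem_insert_iff, Set.mem_singleton_iff]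
    constructor
    · intro _; cases x with
      | T => exact Or.inl rfl
      | G => exact Or.inr rfl
    · intro _ a'; cases a' <;> cases x <;> linarith
  · have hcm : c * μ < 0 := mul_neg_of_pos_of_neg hc hμ
    ext x
    cases x with
    | T =>
      simp only [Set.mem_setOf_eq, Set.mem_singleton_iff]
      constructor
      · intro _; trivial
      · intro _ a'; cases a' <;> linarith
    | G =>
      simp only [Set.mem_setOf_eq, Set.mem_singleton_iff]
      constructor
      · intro hall; have := hall FiscalAct.T; linarith
      · intro hx; exact absurd hx (by simp)

/-- In the fiscal-policy angel-daemon game, with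
μ_ang = b·δ_ang(T) + δ_ang(G) and μ_dae = b·δ_dae(T) + δ_dae(G), the utility
increments are u_ang(G,d) - u_ang(T,d) = (f/g)·μ_ang and
u_dae(a,G) - u_dae(a,T) = (e/g)·μ_dae, and the best-response sets are
determined by the signs of μ_ang and μ_dae. -/
theorem fiscal_game_best_responses
    (Y r b e f g δangT δangG δdaeT δdaeG : ℝ)
    (hb0 : 0 < b) (hb1 : b < 1) (he : 0 < e) (hf : 0 < f) (hg : 0 < g) :
    let uang := fiscalU Y (f / g) b δangT δangG δdaeT δdaeG
    let udae := fiscalU r (e / g) b δangT δangG δdaeT δdaeG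
    let μang := b * δangT + δangG
    let μdae := b * δdaeT + δdaeG
    (∀ d, uang FiscalAct.G d - uang FiscalAct.T d = (f / g) * μang) ∧
    (∀ a, udae a FiscalAct.G - udae a FiscalAct.T = (e / g) * μdae) ∧
    (∀ d,
      (0 < μang → {a : FiscalAct | ∀ a', uang a' d ≤ uang a d} = {FiscalAct.G}) ∧
      (μang = 0 → {a : FiscalAct | ∀ a', uang a' d ≤ uang a d} = {FiscalAct.T, FiscalAct.G}) ∧
      (μang < 0 → {a : FiscalAct | ∀ a', uang a' d ≤ uang a d} = {FiscalAct.T})) ∧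
    (∀ a,
      (0 < μdae → {d : FiscalAct | ∀ d', udae a d' ≤ udae a d} = {FiscalAct.G}) ∧
      (μdae = 0 → {d : FiscalAct | ∀ d', udae a d' ≤ udae a d} = {FiscalAct.T, FiscalAct.G}) ∧
      (μdae < 0 → {d : FiscalAct | ∀ d', udae a d' ≤ udae a d} = {FiscalAct.T})) := by
  intro uang udae μang μdae
  have hfg : 0 < f / g := div_pos hf hg
  have heg : 0 < e / g := div_pos he hg
  have h1 : ∀ d, uang FiscalAct.G d - uang FiscalAct.T d = (f / g) * μang := by
    intro d; cases d <;> simp only [uang, μang, fiscalU] <;> ring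
  have h2 : ∀ a, udae a FiscalAct.G - udae a FiscalAct.T = (e / g) * μdae := by
    intro a; cases a <;> simp only [udae, μdae, fiscalU] <;> ring
  exact ⟨h1, h2,
    fun d => br_aux (fun a => uang a d) (f / g) μang hfg (h1 d),
    fun a => br_aux (fun d => udae a d) (e / g) μdae heg (h2 a)⟩
end

section
/- In the fiscal-policy angel-daemon game (action sets {T, G} for each player; utilities u_ang(T,T) = Y - (f/g)b(δ_ang(T)+δ_dae(T)), u_ang(T,G) = Y + (f/g)(δ_dae(G) - bδ_ang(T)), u_ang(G,T) = Y + (f/g)(δ_ang(G) - bδ_dae(T)), u_ang(G,G) = Y + (f/g)(δ_ang(G)+δ_dae(G)), and u_dae given by the same expressions with f replaced by e and Y by r), assume 0 < b < 1, e > 0, f > 0, g > 0, and set μ_ang = b·δ_ang(T) + δ_ang(G), μ_dae = b·δ_dae(T) + δ_dae(G). If μ_ang ≠ 0 and μ_dae ≠ 0, then the profile (a*, d*), where a* = G if μ_ang > 0 and a* = T if μ_ang < 0, and d* = G if μ_dae > 0 and d* = T if μ_dae < 0, is a dominant strategy equilibrium and the unique pure Nash equilibrium of the game. -/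
/-- (a, d) is a pure Nash equilibrium. -/
def IsPNE {α β : Type*} (uang udae : α → β → ℝ) (a : α) (d : β) : Prop :=
  (∀ a' : α, uang a' d ≤ uang a d) ∧ (∀ d' : β, udae a d' ≤ udae a d)

set_option maxHeartbeats 1000000 in
/-- In the fiscal-policy angel-daemon game, if
μ_ang = b·δ_ang(T) + δ_ang(G) ≠ 0 and μ_dae = b·δ_dae(T) + δ_dae(G) ≠ 0, then
the profile (a*, d*) with a* = G if μ_ang > 0 else T, and d* = G if μ_dae > 0
else T, is a dominant strategy equilibrium and the unique pure Nash
equilibrium. -/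
theorem fiscal_game_unique_PNE
    (Y r b e f g δangT δangG δdaeT δdaeG : ℝ)
    (hb0 : 0 < b) (hb1 : b < 1) (he : 0 < e) (hf : 0 < f) (hg : 0 < g)
    (hμang : b * δangT + δangG ≠ 0) (hμdae : b * δdaeT + δdaeG ≠ 0) :
    let uang := fiscalU Y (f / g) b δangT δangG δdaeT δdaeG
    let udae := fiscalU r (e / g) b δangT δangG δdaeT δdaeG
    let astar : FiscalAct := if 0 < b * δangT + δangG then FiscalAct.G else FiscalAct.T
    let dstar : FiscalAct := if 0 < b * δdaeT + δdaeG then FiscalAct.G else FiscalAct.T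
    IsDSE uang udae astar dstar ∧
    (∀ a d, IsPNE uang udae a d ↔ (a = astar ∧ d = dstar)) := by
  have hfg : 0 < f / g := div_pos hf hg
  have heg : 0 < e / g := div_pos he hg
  intro uang udae astar dstar
  have hDSE : IsDSE uang udae astar dstar := by
    intro a' d'
    rcases hμang.lt_or_gt with h1 | h1 <;> rcases hμdae.lt_or_gt with h2 | h2 <;>
      [ simp only [astar, dstar, if_neg (not_lt.2 h1.le), if_neg (not_lt.2 h2.le)];
        simp only [astar, dstar, if_neg (not_lt.2 h1.le), if_pos h2];
        simp only [astar, dstar, if_pos h1, if_neg (not_lt.2 h2.le)];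
        simp only [astar, dstar, if_pos h1, if_pos h2] ] <;>
      cases a' <;> cases d' <;> constructor <;>
        simp only [uang, udae, fiscalU] <;> nlinarith [hfg, heg, h1, h2]
  refine ⟨hDSE, fun a d => ⟨fun hpne => ?_, ?_⟩⟩
  · obtain ⟨hA, hD⟩ := hpne
    rcases hμang.lt_or_gt with h1 | h1 <;> rcases hμdae.lt_or_gt with h2 | h2 <;>
      [ simp only [astar, dstar, if_neg (not_lt.2 h1.le), if_neg (not_lt.2 h2.le)];
        simp only [astar, dstar, if_neg (not_lt.2 h1.le), if_pos h2];
        simp only [astar, dstar, if_pos h1, if_neg (not_lt.2 h2.le)];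
        simp only [astar, dstar, if_pos h1, if_pos h2] ] <;>
      cases a <;> cases d <;> first
        | exact ⟨rfl, rfl⟩
        | (exfalso; first
            | (have hc := hA FiscalAct.T;
               simp only [uang, fiscalU] at hc; nlinarith [hfg, heg, h1, h2])
            | (have hc := hA FiscalAct.G;
               simp only [uang, fiscalU] at hc; nlinarith [hfg, heg, h1, h2])
            | (have hc := hD FiscalAct.T;
               simp only [udae, fiscalU] at hc; nlinarith [hfg, heg, h1, h2])
            | (have hc := hD FiscalAct.G;
               simp only [udae, fiscalU] at hc; nlinarith [hfg, heg, h1, h2]))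
  · rintro ⟨rfl, rfl⟩
    exact ⟨fun a' => (hDSE a' dstar).1, fun d' => (hDSE astar d').2⟩
end
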